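/- (Uniqueness criterion.) Let K be a bounded non-negative contraction (0 ≤ K ≤ I) on a complex Hilbert space H, M a closed subspace of H, N = M^⊥, and T = P_M K|_M, Γ = P_N K|_M, S = P_N K|_N the compressions of K. For ε > 0 let Λ_{1,ε} = P_N (K + εI)^{-1}|_N and Λ_{2,ε} = P_N ((1+ε)I − K)^{-1}|_N, and suppose G₁, G₂ are bounded operators on N such that Λ_{1,ε}^{-1} y → G₁ y and Λ_{2,ε}^{-1} y → G₂ y for every y ∈ N as ε → 0⁺. Then the following are equivalent: (i) G₁ = 0 and G₂ = 0; (ii) the only bounded self-adjoint operator X on N for which the block operator K_X = [[T, Γ*],[Γ, X]] is a non-negative contraction is X = S (i.e. K is the unique non-negative contractive extension to H of its restriction to M). -/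

import Mathlib

open ContinuousLinearMap
set_option linter.unusedSectionVars false
set_option maxHeartbeats 1000000
local notation "⟪" x ", " y "⟫" => @inner ℂ _ _ x y

/-- The block operator `[[T, Γ*],[Γ, X]]` on `H` relative to the decomposition `H = M ⊕ Mᗮ`,
sending `m + n` (`m ∈ M`, `n ∈ Mᗮ`) to `(Tm + Γ*n) + (Γm + Xn)`. -/
noncomputable def blockOpH
    {H : Type*} [NormedAddCommGroup H] [InnerProductSpace ℂ H] [CompleteSpace H]
    (M : Submodule ℂ H) [CompleteSpace M]
    (T : M →L[ℂ] M) (Γ : M →L[ℂ] Mᗮ) (X : Mᗮ →L[ℂ] Mᗮ) : H →L[ℂ] H :=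
  M.subtypeL.comp
      (T.comp (Submodule.orthogonalProjectionOnto M) +
        (ContinuousLinearMap.adjoint Γ).comp (Submodule.orthogonalProjectionOnto Mᗮ)) +
    Mᗮ.subtypeL.comp
      (Γ.comp (Submodule.orthogonalProjectionOnto M) + X.comp (Submodule.orthogonalProjectionOnto Mᗮ))

section Aux

lemma orthogonalProjection_add_orthogonalProjection_orthogonal
    {H : Type*} [NormedAddCommGroup H] [InnerProductSpace ℂ H] [CompleteSpace H]
    (M : Submodule ℂ H) [CompleteSpace M] (w : H) :
    ((Submodule.orthogonalProjectionOnto M w : H)) + ((Submodule.orthogonalProjectionOnto Mᗮ w : H)) = w :=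
  Submodule.starProjection_add_starProjection_orthogonal (K := M) w

variable {H : Type*} [NormedAddCommGroup H] [InnerProductSpace ℂ H] [CompleteSpace H]
variable (M : Submodule ℂ H) [CompleteSpace M]


lemma aux_inner_coe (u : Mᗮ) (h : H) :
    ⟪(u : H), h⟫ = ⟪u, Submodule.orthogonalProjectionOnto Mᗮ h⟫ := by
  rw [Submodule.coe_inner]
  have h0 : ⟪(u:H), h - (Submodule.orthogonalProjectionOnto Mᗮ h : H)⟫ = 0 :=
    Submodule.inner_right_of_mem_orthogonal u.2 (Submodule.sub_starProjection_mem_orthogonal (K := Mᗮ) h)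
  rw [inner_sub_right, sub_eq_zero] at h0
  exact h0

lemma aux_isUnit (A : H →L[ℂ] H) (hA : A.IsPositive) {ε : ℝ} (hε : 0 < ε) :
    IsUnit (A + (ε : ℂ) • (1 : H →L[ℂ] H)) := by
  have hc : (0 : NNReal) < ⟨ε, hε.le⟩ := by exact_mod_cast hε
  apply ContinuousLinearMap.isUnit_of_forall_le_norm_inner_map _ hc
  intro x
  have h1 : (A + (ε:ℂ) • (1 : H →L[ℂ] H)) x = A x + (ε:ℂ) • x := by simp
  have h2 : Complex.re ⟪(A + (ε:ℂ) • (1 : H →L[ℂ] H)) x, x⟫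
      = Complex.re ⟪A x, x⟫ + ε * ‖x‖^2 := by
    rw [h1, inner_add_left, inner_smul_left, Complex.add_re]
    congr 1
    have : ⟪x, x⟫ = ((‖x‖ : ℂ))^2 := inner_self_eq_norm_sq_to_K x
    rw [Complex.conj_ofReal, this, ← Complex.ofReal_pow, ← Complex.ofReal_mul]
    exact Complex.ofReal_re _
  have h3 : 0 ≤ Complex.re ⟪A x, x⟫ := hA.re_inner_nonneg_left x
  have h4 : ‖x‖^2 * ε ≤ Complex.re ⟪(A + (ε:ℂ) • (1 : H →L[ℂ] H)) x, x⟫ := by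
    rw [h2]; nlinarith
  calc ‖x‖ ^ 2 * ((⟨ε, hε.le⟩ : NNReal) : ℝ) = ‖x‖^2 * ε := rfl
    _ ≤ Complex.re ⟪(A + (ε:ℂ) • (1 : H →L[ℂ] H)) x, x⟫ := h4
    _ ≤ ‖⟪(A + (ε:ℂ) • (1 : H →L[ℂ] H)) x, x⟫‖ := Complex.re_le_norm _

lemma aux_compress_sa (A : H →L[ℂ] H) (hA : IsSelfAdjoint A) :
    IsSelfAdjoint ((Submodule.orthogonalProjectionOnto Mᗮ).comp (A.comp Mᗮ.subtypeL)) := by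
  rw [ContinuousLinearMap.isSelfAdjoint_iff']
  rw [adjoint_comp, adjoint_comp, Submodule.adjoint_orthogonalProjectionOnto,
    Submodule.adjoint_subtypeL, hA.adjoint_eq, comp_assoc]

lemma aux_smul_one_sa {ε : ℝ} : IsSelfAdjoint ((ε : ℂ) • (1 : H →L[ℂ] H)) := by
  have : (starRingEnd ℂ) (ε : ℂ) = (ε : ℂ) := Complex.conj_ofReal ε
  exact IsSelfAdjoint.smul this (IsSelfAdjoint.one (R := H →L[ℂ] H))

lemma aux_U_form (A : H →L[ℂ] H) (ε : ℝ) (w : H) :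
    Complex.re ⟪(A + (ε:ℂ) • (1 : H →L[ℂ] H)) w, w⟫
      = Complex.re ⟪A w, w⟫ + ε * ‖w‖^2 := by
  have h1 : (A + (ε:ℂ) • (1 : H →L[ℂ] H)) w = A w + (ε:ℂ) • w := by simp
  rw [h1, inner_add_left, inner_smul_left, Complex.add_re]
  congr 1
  have : ⟪w, w⟫ = ((‖w‖ : ℂ))^2 := inner_self_eq_norm_sq_to_K w
  rw [Complex.conj_ofReal, this, ← Complex.ofReal_pow, ← Complex.ofReal_mul]
  exact Complex.ofReal_re _

lemma aux_key (A : H →L[ℂ] H) (hA : A.IsPositive)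
    (Λ : ℝ → (Mᗮ →L[ℂ] Mᗮ))
    (hΛ : ∀ ε : ℝ, Λ ε = (Submodule.orthogonalProjectionOnto Mᗮ).comp
      ((Ring.inverse (A + (ε : ℂ) • (1 : H →L[ℂ] H))).comp Mᗮ.subtypeL))
    (hΛu : ∀ ε : ℝ, 0 < ε → IsUnit (Λ ε))
    {ε : ℝ} (hε : 0 < ε) (n : Mᗮ) :
    (∀ m : M, Complex.re ⟪Ring.inverse (Λ ε) n, n⟫ ≤
        Complex.re ⟪A ((m:H) + (n:H)), (m:H) + (n:H)⟫ + ε * ‖(m:H) + (n:H)‖^2) ∧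
    (∃ m : M, Complex.re ⟪A ((m:H) + (n:H)), (m:H) + (n:H)⟫ ≤
        Complex.re ⟪Ring.inverse (Λ ε) n, n⟫) := by
  set U : H →L[ℂ] H := A + (ε:ℂ) • (1 : H →L[ℂ] H) with hUdef
  have hUu : IsUnit U := aux_isUnit A hA hε
  have hUsa : IsSelfAdjoint U := hA.isSelfAdjoint.add aux_smul_one_sa
  set B : H →L[ℂ] H := Ring.inverse U with hBdef
  have hUB : ∀ x : H, U (B x) = x := by
    intro x
    have h1 : U * B = 1 := Ring.mul_inverse_cancel U hUu
    calc U (B x) = (U * B) x := rfl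
      _ = x := by rw [h1]; rfl
  set k : Mᗮ := Ring.inverse (Λ ε) n with hkdef
  set h : H := B (k : H) with hhdef
  have hPh : Submodule.orthogonalProjectionOnto Mᗮ h = n := by
    have h1 : Submodule.orthogonalProjectionOnto Mᗮ h = Λ ε k := by rw [hΛ ε]; rfl
    have h2 : Λ ε * Ring.inverse (Λ ε) = 1 := Ring.mul_inverse_cancel _ (hΛu ε hε)
    rw [h1, hkdef]
    calc Λ ε (Ring.inverse (Λ ε) n) = (Λ ε * Ring.inverse (Λ ε)) n := rfl
      _ = n := by rw [h2]; rfl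
  have hUh : U h = (k : H) := hUB _
  have hUform : Complex.re ⟪U h, h⟫ = Complex.re ⟪k, n⟫ := by
    rw [hUh, aux_inner_coe M k h, hPh]
  have hUpos : ∀ w : H, 0 ≤ Complex.re ⟪U w, w⟫ := by
    intro w
    rw [aux_U_form]
    have h0 : 0 ≤ Complex.re ⟪A w, w⟫ := hA.re_inner_nonneg_left w
    nlinarith [sq_nonneg ‖w‖]
  have hsym := ContinuousLinearMap.isSelfAdjoint_iff_isSymmetric.mp hUsa
  have hkey : ∀ d : H, ⟪U h, d⟫ = 0 →
      Complex.re ⟪U h, h⟫ ≤ Complex.re ⟪U (h + d), h + d⟫ := by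
    intro d hd
    have h2 : ⟪U d, h⟫ = 0 := by
      have := hsym.apply_clm d h
      rw [this, ← inner_conj_symm, hd, map_zero]
    have hexp : ⟪U (h + d), h + d⟫ = ⟪U h, h⟫ + ⟪U d, d⟫ := by
      rw [map_add, inner_add_left, inner_add_right, inner_add_right, hd, h2]
      ring
    rw [hexp, Complex.add_re]
    have := hUpos d
    linarith
  constructor
  · intro m
    set w : H := (m:H) + (n:H) with hwdef
    set d : H := w - h with hddef
    have hPd : Submodule.orthogonalProjectionOnto Mᗮ d = 0 := by
      rw [hddef, map_sub, hPh, hwdef, map_add,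
        Submodule.orthogonalProjectionOnto_apply_of_mem_orthogonal (Submodule.le_orthogonal_orthogonal M m.2),
        Submodule.orthogonalProjectionOnto_mem_subspace_eq_self]
      simp
    have hd0 : ⟪U h, d⟫ = 0 := by
      rw [hUh, aux_inner_coe M k d, hPd]
      simp
    have h1 := hkey d hd0
    have h2 : h + d = w := by rw [hddef]; abel
    rw [h2] at h1
    have h3 : Complex.re ⟪U w, w⟫ = Complex.re ⟪A w, w⟫ + ε * ‖w‖^2 := aux_U_form A ε w
    rw [hUform, h3] at h1
    exact h1
  · refine ⟨Submodule.orthogonalProjectionOnto M h, ?_⟩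
    have hw : ((Submodule.orthogonalProjectionOnto M h : H)) + ((n : H)) = h := by
      rw [← hPh]
      exact orthogonalProjection_add_orthogonalProjection_orthogonal M h
    rw [hw]
    have h3 : Complex.re ⟪U h, h⟫ = Complex.re ⟪A h, h⟫ + ε * ‖h‖^2 := aux_U_form A ε h
    rw [hUform] at h3
    nlinarith [sq_nonneg ‖h‖]


lemma auxD_sa (Y : Mᗮ →L[ℂ] Mᗮ) (hY : IsSelfAdjoint Y) :
    IsSelfAdjoint (Mᗮ.subtypeL.comp (Y.comp (Submodule.orthogonalProjectionOnto Mᗮ))) := by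
  rw [ContinuousLinearMap.isSelfAdjoint_iff', adjoint_comp, adjoint_comp,
    Submodule.adjoint_subtypeL, Submodule.adjoint_orthogonalProjectionOnto, hY.adjoint_eq, comp_assoc]

lemma auxD_pos (Y : Mᗮ →L[ℂ] Mᗮ) (hY : Y.IsPositive) :
    (Mᗮ.subtypeL.comp (Y.comp (Submodule.orthogonalProjectionOnto Mᗮ))).IsPositive := by
  have h := hY.conj_adjoint Mᗮ.subtypeL
  rwa [Submodule.adjoint_subtypeL] at h

lemma auxD_form (Y : Mᗮ →L[ℂ] Mᗮ) (h : H) :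
    Complex.re ⟪(Mᗮ.subtypeL.comp (Y.comp (Submodule.orthogonalProjectionOnto Mᗮ))) h, h⟫
      = Complex.re ⟪Y (Submodule.orthogonalProjectionOnto Mᗮ h), Submodule.orthogonalProjectionOnto Mᗮ h⟫ := by
  have h1 : (Mᗮ.subtypeL.comp (Y.comp (Submodule.orthogonalProjectionOnto Mᗮ))) h
      = ((Y (Submodule.orthogonalProjectionOnto Mᗮ h) : Mᗮ) : H) := rfl
  rw [h1, aux_inner_coe]

lemma aux_Pw (m : M) (n : Mᗮ) :
    Submodule.orthogonalProjectionOnto Mᗮ ((m:H) + (n:H)) = n := by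
  rw [map_add, Submodule.orthogonalProjectionOnto_apply_of_mem_orthogonal
    (Submodule.le_orthogonal_orthogonal M m.2), Submodule.orthogonalProjectionOnto_mem_subspace_eq_self]
  simp


variable (A : H →L[ℂ] H) (hA : A.IsPositive)
    (Λ : ℝ → (Mᗮ →L[ℂ] Mᗮ))
    (hΛ : ∀ ε : ℝ, Λ ε = (Submodule.orthogonalProjectionOnto Mᗮ).comp
      ((Ring.inverse (A + (ε : ℂ) • (1 : H →L[ℂ] H))).comp Mᗮ.subtypeL))
    (hΛu : ∀ ε : ℝ, 0 < ε → IsUnit (Λ ε))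
    (G : Mᗮ →L[ℂ] Mᗮ)
    (hG : ∀ y : Mᗮ, Filter.Tendsto (fun ε : ℝ => Ring.inverse (Λ ε) y)
      (nhdsWithin 0 (Set.Ioi 0)) (nhds (G y)))

include hΛ hΛu hG

lemma aux_tendsto_inner (n n' : Mᗮ) :
    Filter.Tendsto (fun ε : ℝ => Complex.re ⟪Ring.inverse (Λ ε) n, n'⟫)
      (nhdsWithin 0 (Set.Ioi 0)) (nhds (Complex.re ⟪G n, n'⟫)) := by
  have h1 : Filter.Tendsto (fun ε : ℝ => ⟪Ring.inverse (Λ ε) n, n'⟫)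
      (nhdsWithin 0 (Set.Ioi 0)) (nhds ⟪G n, n'⟫) :=
    (hG n).inner tendsto_const_nhds
  exact (Complex.continuous_re.tendsto _).comp h1

include hA

lemma aux_L1 (n : Mᗮ) (m : M) :
    Complex.re ⟪G n, n⟫ ≤ Complex.re ⟪A ((m:H) + (n:H)), (m:H) + (n:H)⟫ := by
  have hten := aux_tendsto_inner M A Λ hΛ hΛu G hG n n
  set C : ℝ := Complex.re ⟪A ((m:H) + (n:H)), (m:H) + (n:H)⟫ with hC
  set c : ℝ := ‖(m:H) + (n:H)‖^2 with hc
  have hg : Filter.Tendsto (fun ε : ℝ => C + ε * c) (nhdsWithin 0 (Set.Ioi 0)) (nhds C) := by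
    have h0 : Filter.Tendsto (fun ε : ℝ => ε) (nhdsWithin 0 (Set.Ioi 0)) (nhds 0) :=
      Filter.Tendsto.mono_left Filter.tendsto_id nhdsWithin_le_nhds
    have := tendsto_const_nhds (x := C) (f := nhdsWithin (0:ℝ) (Set.Ioi 0)) |>.add
      (h0.mul_const c)
    simpa using this
  refine le_of_tendsto_of_tendsto hten hg ?_
  filter_upwards [self_mem_nhdsWithin] with ε hε
  exact (aux_key M A hA Λ hΛ hΛu (Set.mem_Ioi.mp hε) n).1 m

lemma aux_L2 (n : Mᗮ) (r : ℝ)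
    (hr : ∀ m : M, r ≤ Complex.re ⟪A ((m:H) + (n:H)), (m:H) + (n:H)⟫) :
    r ≤ Complex.re ⟪G n, n⟫ := by
  have hten := aux_tendsto_inner M A Λ hΛ hΛu G hG n n
  refine ge_of_tendsto hten ?_
  filter_upwards [self_mem_nhdsWithin] with ε hε
  obtain ⟨m, hm⟩ := (aux_key M A hA Λ hΛ hΛu (Set.mem_Ioi.mp hε) n).2
  exact le_trans (hr m) hm

lemma aux_L3 : IsSelfAdjoint G := by
  have hsa : ∀ ε : ℝ, 0 < ε → IsSelfAdjoint (Ring.inverse (Λ ε)) := by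
    intro ε hε
    have hUsa : IsSelfAdjoint (A + (ε:ℂ) • (1 : H →L[ℂ] H)) := hA.isSelfAdjoint.add aux_smul_one_sa
    have hBsa : IsSelfAdjoint (Ring.inverse (A + (ε:ℂ) • (1 : H →L[ℂ] H))) := by
      have := Ring.inverse_star (A + (ε:ℂ) • (1 : H →L[ℂ] H))
      rw [hUsa.star_eq] at this
      exact this.symm
    have hΛsa : IsSelfAdjoint (Λ ε) := by
      rw [hΛ ε]; exact aux_compress_sa M _ hBsa
    have := Ring.inverse_star (Λ ε)
    rw [hΛsa.star_eq] at this
    exact this.symm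
  rw [ContinuousLinearMap.isSelfAdjoint_iff_isSymmetric]
  intro x y
  have t1 : Filter.Tendsto (fun ε : ℝ => ⟪Ring.inverse (Λ ε) x, y⟫)
      (nhdsWithin 0 (Set.Ioi 0)) (nhds ⟪G x, y⟫) := (hG x).inner tendsto_const_nhds
  have t2 : Filter.Tendsto (fun ε : ℝ => ⟪x, Ring.inverse (Λ ε) y⟫)
      (nhdsWithin 0 (Set.Ioi 0)) (nhds ⟪x, G y⟫) :=
    Filter.Tendsto.inner tendsto_const_nhds (hG y)
  have heq : (fun ε : ℝ => ⟪Ring.inverse (Λ ε) x, y⟫) =ᶠ[nhdsWithin 0 (Set.Ioi 0)]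
      (fun ε : ℝ => ⟪x, Ring.inverse (Λ ε) y⟫) := by
    filter_upwards [self_mem_nhdsWithin] with ε hε
    exact (ContinuousLinearMap.isSelfAdjoint_iff_isSymmetric.mp
      (hsa ε (Set.mem_Ioi.mp hε))).apply_clm x y
  exact tendsto_nhds_unique (t1.congr' heq) t2

lemma aux_L4 : G.IsPositive := by
  refine isPositive_def'.mpr ⟨aux_L3 M A hA Λ hΛ hΛu G hG, fun n => ?_⟩
  have h0 : (0:ℝ) ≤ Complex.re ⟪G n, n⟫ := by
    refine aux_L2 M A hA Λ hΛ hΛu G hG n 0 (fun m => ?_)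
    exact hA.re_inner_nonneg_left _
  exact h0


end Aux

/-- **uniqueness criterion.** With the notation of the theorem on non-negative
contractive extensions: `G₁ = 0` and `G₂ = 0` if and only if the only bounded self-adjoint `X`
on `N = Mᗮ` for which the block operator `K_X = [[T, Γ*],[Γ, X]]` is a non-negative
contraction is `X = S`, i.e. `K` is the unique non-negative contractive extension to `H` of
its restriction to `M`. -/
theorem stmt_8
    {H : Type*} [NormedAddCommGroup H] [InnerProductSpace ℂ H] [CompleteSpace H]
    (K : H →L[ℂ] H) (hK : K.IsPositive) (hK1 : ((1 : H →L[ℂ] H) - K).IsPositive)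
    (M : Submodule ℂ H) [CompleteSpace M]
    (T : M →L[ℂ] M) (Γ : M →L[ℂ] Mᗮ) (S : Mᗮ →L[ℂ] Mᗮ)
    (hT : T = (Submodule.orthogonalProjectionOnto M).comp (K.comp M.subtypeL))
    (hΓ : Γ = (Submodule.orthogonalProjectionOnto Mᗮ).comp (K.comp M.subtypeL))
    (hS : S = (Submodule.orthogonalProjectionOnto Mᗮ).comp (K.comp Mᗮ.subtypeL))
    (Λ₁ Λ₂ : ℝ → (Mᗮ →L[ℂ] Mᗮ))
    (hΛ₁ : ∀ ε : ℝ, Λ₁ ε = (Submodule.orthogonalProjectionOnto Mᗮ).comp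
      ((Ring.inverse (K + (ε : ℂ) • (1 : H →L[ℂ] H))).comp Mᗮ.subtypeL))
    (hΛ₂ : ∀ ε : ℝ, Λ₂ ε = (Submodule.orthogonalProjectionOnto Mᗮ).comp
      ((Ring.inverse ((1 + ε : ℂ) • (1 : H →L[ℂ] H) - K)).comp Mᗮ.subtypeL))
    (hΛ₁u : ∀ ε : ℝ, 0 < ε → IsUnit (Λ₁ ε)) (hΛ₂u : ∀ ε : ℝ, 0 < ε → IsUnit (Λ₂ ε))
    (G₁ G₂ : Mᗮ →L[ℂ] Mᗮ)
    (hG₁ : ∀ y : Mᗮ, Filter.Tendsto (fun ε : ℝ => Ring.inverse (Λ₁ ε) y)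
      (nhdsWithin 0 (Set.Ioi 0)) (nhds (G₁ y)))
    (hG₂ : ∀ y : Mᗮ, Filter.Tendsto (fun ε : ℝ => Ring.inverse (Λ₂ ε) y)
      (nhdsWithin 0 (Set.Ioi 0)) (nhds (G₂ y)))
:
    (G₁ = 0 ∧ G₂ = 0) ↔
      ∀ X : Mᗮ →L[ℂ] Mᗮ, IsSelfAdjoint X →
        (blockOpH M T Γ X).IsPositive →
        ((1 : H →L[ℂ] H) - blockOpH M T Γ X).IsPositive → X = S := by
  have hKsa : IsSelfAdjoint K := hK.isSelfAdjoint
  -- rewrite Λ₂ in the generic form for `A = 1 - K`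
  have hΛ₂' : ∀ ε : ℝ, Λ₂ ε = (Submodule.orthogonalProjectionOnto Mᗮ).comp
      ((Ring.inverse (((1 : H →L[ℂ] H) - K) + (ε : ℂ) • (1 : H →L[ℂ] H))).comp Mᗮ.subtypeL) := by
    intro ε
    rw [hΛ₂ ε]
    congr 2
    rw [add_smul, one_smul]
    abel
  -- adjoint of Γ
  have hadjΓ2 : ContinuousLinearMap.adjoint ((Submodule.orthogonalProjectionOnto Mᗮ).comp (K.comp M.subtypeL))
      = (Submodule.orthogonalProjectionOnto M).comp (K.comp Mᗮ.subtypeL) := by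
    rw [adjoint_comp, adjoint_comp, Submodule.adjoint_orthogonalProjectionOnto,
      Submodule.adjoint_subtypeL, hKsa.adjoint_eq, comp_assoc]
  have hSsa : IsSelfAdjoint S := by rw [hS]; exact aux_compress_sa M K hKsa
  -- block decomposition of K
  have hblockS : blockOpH M T Γ S = K := by
    apply ContinuousLinearMap.ext
    intro h
    have hKdec : ∀ x : H,
        ((Submodule.orthogonalProjectionOnto M x : H)) + ((Submodule.orthogonalProjectionOnto Mᗮ x : H)) = x :=
      orthogonalProjection_add_orthogonalProjection_orthogonal M
    simp only [blockOpH, hΓ, hadjΓ2, hT, hS, add_apply, comp_apply,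
      Submodule.subtypeL_apply, Submodule.coe_add]
    have e0 : K h = K ((Submodule.orthogonalProjectionOnto M h : H)) + K ((Submodule.orthogonalProjectionOnto Mᗮ h : H)) := by
      rw [← map_add, hKdec h]
    conv_rhs => rw [e0, ← hKdec (K ((Submodule.orthogonalProjectionOnto M h : H))),
      ← hKdec (K ((Submodule.orthogonalProjectionOnto Mᗮ h : H)))]
    abel
  have hblockX : ∀ X : Mᗮ →L[ℂ] Mᗮ, blockOpH M T Γ X
      = K + Mᗮ.subtypeL.comp ((X - S).comp (Submodule.orthogonalProjectionOnto Mᗮ)) := by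
    intro X
    have h1 : blockOpH M T Γ X
        = blockOpH M T Γ S + Mᗮ.subtypeL.comp ((X - S).comp (Submodule.orthogonalProjectionOnto Mᗮ)) := by
      apply ContinuousLinearMap.ext
      intro h
      simp only [blockOpH, add_apply, comp_apply, sub_apply, Submodule.subtypeL_apply,
        Submodule.coe_add, Submodule.coe_sub, map_sub]
      abel
    rw [h1, hblockS]
  constructor
  · rintro ⟨hz1, hz2⟩ X hXsa hpos hcon
    have hXSsa : IsSelfAdjoint (X - S) := IsSelfAdjoint.sub (R := Mᗮ →L[ℂ] Mᗮ) hXsa hSsa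
    have hz : ∀ n : Mᗮ, ⟪(X - S) n, n⟫ = 0 := by
      intro n
      have hge : 0 ≤ Complex.re ⟪(X - S) n, n⟫ := by
        have hr : ∀ m : M, -Complex.re ⟪(X - S) n, n⟫
            ≤ Complex.re ⟪K ((m:H) + (n:H)), (m:H) + (n:H)⟫ := by
          intro m
          have hw : (0:ℝ) ≤ Complex.re ⟪(blockOpH M T Γ X) ((m:H) + (n:H)), (m:H) + (n:H)⟫ :=
            hpos.2 ((m:H) + (n:H))
          rw [hblockX X, add_apply, inner_add_left, Complex.add_re,
            auxD_form M (X - S), aux_Pw M m n] at hw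
          linarith
        have := aux_L2 M K hK Λ₁ hΛ₁ hΛ₁u G₁ hG₁ n (-Complex.re ⟪(X - S) n, n⟫) hr
        rw [hz1] at this
        simp only [zero_apply, inner_zero_left, Complex.zero_re] at this
        linarith
      have hle : Complex.re ⟪(X - S) n, n⟫ ≤ 0 := by
        have hr : ∀ m : M, Complex.re ⟪(X - S) n, n⟫
            ≤ Complex.re ⟪((1 : H →L[ℂ] H) - K) ((m:H) + (n:H)), (m:H) + (n:H)⟫ := by
          intro m
          have hw : (0:ℝ) ≤ Complex.re
              ⟪((1 : H →L[ℂ] H) - blockOpH M T Γ X) ((m:H) + (n:H)), (m:H) + (n:H)⟫ :=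
            hcon.2 ((m:H) + (n:H))
          have he : (1 : H →L[ℂ] H) - blockOpH M T Γ X
              = ((1 : H →L[ℂ] H) - K) - Mᗮ.subtypeL.comp ((X - S).comp (Submodule.orthogonalProjectionOnto Mᗮ)) := by
            rw [hblockX X]; abel
          rw [he, sub_apply, inner_sub_left, Complex.sub_re,
            auxD_form M (X - S), aux_Pw M m n] at hw
          linarith
        have := aux_L2 M ((1 : H →L[ℂ] H) - K) hK1 Λ₂ hΛ₂' hΛ₂u G₂ hG₂ n
          (Complex.re ⟪(X - S) n, n⟫) hr
        rw [hz2] at this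
        simp only [zero_apply, inner_zero_left, Complex.zero_re] at this
        linarith
      have hre : Complex.re ⟪(X - S) n, n⟫ = 0 := le_antisymm hle hge
      have him : (starRingEnd ℂ) ⟪(X - S) n, n⟫ = ⟪(X - S) n, n⟫ :=
        (ContinuousLinearMap.isSelfAdjoint_iff_isSymmetric.mp hXSsa).conj_inner_sym n n
      have him' : (⟪(X - S) n, n⟫).im = 0 := Complex.conj_eq_iff_im.mp him
      exact Complex.ext hre him'
    have : (X - S : Mᗮ →L[ℂ] Mᗮ) = 0 := by
      apply ContinuousLinearMap.coe_injective
      simpa using (inner_map_self_eq_zero ((X - S : Mᗮ →L[ℂ] Mᗮ) : Mᗮ →ₗ[ℂ] Mᗮ)).mp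
        (fun x => hz x)
    rw [← sub_eq_zero]
    exact this
  · intro hu
    have hG₁sa : IsSelfAdjoint G₁ := aux_L3 M K hK Λ₁ hΛ₁ hΛ₁u G₁ hG₁
    have hG₂sa : IsSelfAdjoint G₂ := aux_L3 M ((1 : H →L[ℂ] H) - K) hK1 Λ₂ hΛ₂' hΛ₂u G₂ hG₂
    have hG₁pos : G₁.IsPositive := aux_L4 M K hK Λ₁ hΛ₁ hΛ₁u G₁ hG₁
    have hG₂pos : G₂.IsPositive := aux_L4 M ((1 : H →L[ℂ] H) - K) hK1 Λ₂ hΛ₂' hΛ₂u G₂ hG₂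
    constructor
    · -- apply uniqueness to X = S - G₁
      have hb : blockOpH M T Γ (S - G₁)
          = K + Mᗮ.subtypeL.comp ((-G₁).comp (Submodule.orthogonalProjectionOnto Mᗮ)) := by
        rw [hblockX (S - G₁), sub_sub_cancel_left]
      have hpos : (blockOpH M T Γ (S - G₁)).IsPositive := by
        rw [hb]
        refine isPositive_def'.mpr ⟨hKsa.add (auxD_sa M (-G₁) (IsSelfAdjoint.neg (R := Mᗮ →L[ℂ] Mᗮ) hG₁sa)), fun w => ?_⟩
        have h1 : (0:ℝ) ≤ Complex.re ⟪K w, w⟫ - Complex.re ⟪G₁ (Submodule.orthogonalProjectionOnto Mᗮ w),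
            Submodule.orthogonalProjectionOnto Mᗮ w⟫ := by
          have h2 := aux_L1 M K hK Λ₁ hΛ₁ hΛ₁u G₁ hG₁ (Submodule.orthogonalProjectionOnto Mᗮ w)
            (Submodule.orthogonalProjectionOnto M w)
          rw [orthogonalProjection_add_orthogonalProjection_orthogonal M w] at h2
          linarith
        show (0:ℝ) ≤ Complex.re ⟪_, w⟫
        rw [add_apply, inner_add_left, Complex.add_re, auxD_form M (-G₁)]
        simp only [neg_apply, inner_neg_left, Complex.neg_re]
        linarith
      have hcon : ((1 : H →L[ℂ] H) - blockOpH M T Γ (S - G₁)).IsPositive := by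
        have he : (1 : H →L[ℂ] H) - blockOpH M T Γ (S - G₁)
            = ((1 : H →L[ℂ] H) - K) + Mᗮ.subtypeL.comp (G₁.comp (Submodule.orthogonalProjectionOnto Mᗮ)) := by
          rw [hb]
          have hneg : Mᗮ.subtypeL.comp ((-G₁).comp (Submodule.orthogonalProjectionOnto Mᗮ))
              = -(Mᗮ.subtypeL.comp (G₁.comp (Submodule.orthogonalProjectionOnto Mᗮ))) := by
            apply ContinuousLinearMap.ext
            intro h
            simp
          rw [hneg]
          abel
        rw [he]
        exact hK1.add (auxD_pos M G₁ hG₁pos)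
      have := hu (S - G₁) (IsSelfAdjoint.sub (R := Mᗮ →L[ℂ] Mᗮ) hSsa hG₁sa) hpos hcon
      calc G₁ = S - (S - G₁) := by abel
        _ = S - S := by rw [this]
        _ = 0 := sub_self S
    · -- apply uniqueness to X = S + G₂
      have hb : blockOpH M T Γ (S + G₂)
          = K + Mᗮ.subtypeL.comp (G₂.comp (Submodule.orthogonalProjectionOnto Mᗮ)) := by
        rw [hblockX (S + G₂), add_sub_cancel_left]
      have hpos : (blockOpH M T Γ (S + G₂)).IsPositive := by
        rw [hb]
        exact hK.add (auxD_pos M G₂ hG₂pos)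
      have hcon : ((1 : H →L[ℂ] H) - blockOpH M T Γ (S + G₂)).IsPositive := by
        have he : (1 : H →L[ℂ] H) - blockOpH M T Γ (S + G₂)
            = ((1 : H →L[ℂ] H) - K) + Mᗮ.subtypeL.comp ((-G₂).comp (Submodule.orthogonalProjectionOnto Mᗮ)) := by
          rw [hb]
          have hneg : Mᗮ.subtypeL.comp ((-G₂).comp (Submodule.orthogonalProjectionOnto Mᗮ))
              = -(Mᗮ.subtypeL.comp (G₂.comp (Submodule.orthogonalProjectionOnto Mᗮ))) := by
            apply ContinuousLinearMap.ext
            intro h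
            simp
          rw [hneg]
          abel
        rw [he]
        refine isPositive_def'.mpr ⟨((hK1.isSelfAdjoint).add (auxD_sa M (-G₂) (IsSelfAdjoint.neg (R := Mᗮ →L[ℂ] Mᗮ) hG₂sa))), fun w => ?_⟩
        have h1 : (0:ℝ) ≤ Complex.re ⟪((1 : H →L[ℂ] H) - K) w, w⟫
            - Complex.re ⟪G₂ (Submodule.orthogonalProjectionOnto Mᗮ w), Submodule.orthogonalProjectionOnto Mᗮ w⟫ := by
          have h2 := aux_L1 M ((1 : H →L[ℂ] H) - K) hK1 Λ₂ hΛ₂' hΛ₂u G₂ hG₂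
            (Submodule.orthogonalProjectionOnto Mᗮ w) (Submodule.orthogonalProjectionOnto M w)
          rw [orthogonalProjection_add_orthogonalProjection_orthogonal M w] at h2
          linarith
        show (0:ℝ) ≤ Complex.re ⟪_, w⟫
        rw [add_apply, inner_add_left, Complex.add_re, auxD_form M (-G₂)]
        simp only [neg_apply, inner_neg_left, Complex.neg_re]
        linarith
      have := hu (S + G₂) (IsSelfAdjoint.add (R := Mᗮ →L[ℂ] Mᗮ) hSsa hG₂sa) hpos hcon
      calc G₂ = (S + G₂) - S := by abel
        _ = S - S := by rw [this]
        _ = 0 := sub_self S
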